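/- If ρ : L^∞(P) → ℝ has the Lebesgue property and ρ^{**} is real-valued, then ρ^{**} has the Lebesgue property; equivalently, each sublevel set {Y : ρ*(Y) ≤ λ} is uniformly P-integrable. -/

import Mathlib

open MeasureTheory
noncomputable section

/-- The Lebesgue property: continuity along `L^∞`-bounded sequences converging in
probability. -/
def LebesgueProperty {Ω : Type*} [MeasurableSpace Ω] (P : Measure Ω)
    [IsProbabilityMeasure P] (ρ : Lp ℝ ⊤ P → ℝ) : Prop :=
  ∀ (Xn : ℕ → Lp ℝ ⊤ P) (X : Lp ℝ ⊤ P), (∃ M : ℝ, ∀ n, ‖Xn n‖ ≤ M) →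
    TendstoInMeasure P (fun n => ⇑(Xn n)) Filter.atTop ⇑X →
    Filter.Tendsto (fun n => ρ (Xn n)) Filter.atTop (nhds (ρ X))

/-- The convex conjugate `ρ* : L¹(P) → EReal`. -/
def conjugate {Ω : Type*} [MeasurableSpace Ω] (P : Measure Ω) [IsProbabilityMeasure P]
    (ρ : Lp ℝ ⊤ P → ℝ) (Y : Lp ℝ 1 P) : EReal :=
  ⨆ X : Lp ℝ ⊤ P, ((∫ ω, X ω * Y ω ∂P - ρ X : ℝ) : EReal)

namespace RiskAux

open Filter

lemma measurable_realSign : Measurable Real.sign := by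
  have h : Real.sign = fun r : ℝ => if r < 0 then (-1 : ℝ) else if 0 < r then 1 else 0 := by
    funext r; rfl
  rw [h]
  exact Measurable.ite (measurableSet_lt measurable_id measurable_const) measurable_const
    (Measurable.ite (measurableSet_lt measurable_const measurable_id) measurable_const
      measurable_const)

lemma abs_sign_le (y : ℝ) : |Real.sign y| ≤ 1 := by
  rcases Real.sign_apply_eq y with h | h | h <;> rw [h] <;> norm_num

lemma sign_mul_self (y : ℝ) : Real.sign y * y = |y| := by
  rcases lt_trichotomy y 0 with h | h | h
  · rw [Real.sign_of_neg h, abs_of_neg h]; ring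
  · simp [h]
  · rw [Real.sign_of_pos h, abs_of_pos h]; ring

variable {Ω : Type*} [MeasurableSpace Ω] {P : Measure Ω} [IsProbabilityMeasure P]

lemma ae_bound (X : Lp ℝ ⊤ P) : ∀ᵐ ω ∂P, |X ω| ≤ ‖X‖ := by
  filter_upwards [ae_le_eLpNormEssSup (f := ⇑X) (μ := P)] with ω hω
  have hne : eLpNorm (⇑X) ⊤ P ≠ ⊤ := Lp.eLpNorm_ne_top X
  rw [eLpNorm_exponent_top] at hne
  have h2 := ENNReal.toReal_mono hne hω
  rw [Lp.norm_def, eLpNorm_exponent_top]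
  rw [toReal_enorm, Real.norm_eq_abs] at h2
  exact h2

lemma integrable_mul {f : Ω → ℝ} (hf : AEStronglyMeasurable f P) {C : ℝ}
    (hC : ∀ᵐ ω ∂P, |f ω| ≤ C) (Y : Lp ℝ 1 P) :
    Integrable (fun ω => f ω * Y ω) P := by
  have hY : Integrable (⇑Y) P := L1.integrable_coeFn Y
  refine Integrable.mono' (hY.abs.const_mul C) (hf.mul (Lp.aestronglyMeasurable Y)) ?_
  filter_upwards [hC] with ω hω
  rw [Real.norm_eq_abs, abs_mul]
  exact mul_le_mul_of_nonneg_right hω (abs_nonneg _)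

lemma integral_abs_nonneg (Y : Lp ℝ 1 P) : 0 ≤ ∫ ω, |Y ω| ∂P :=
  integral_nonneg fun ω => abs_nonneg _

lemma integral_mul_le {f : Ω → ℝ} (hf : AEStronglyMeasurable f P) {C : ℝ}
    (hC : ∀ᵐ ω ∂P, |f ω| ≤ C) (Y : Lp ℝ 1 P) :
    |∫ ω, f ω * Y ω ∂P| ≤ C * ∫ ω, |Y ω| ∂P := by
  have h1 : Integrable (fun ω => f ω * Y ω) P := integrable_mul hf hC Y
  have h2 : |∫ ω, f ω * Y ω ∂P| ≤ ∫ ω, |f ω| * |Y ω| ∂P := by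
    simpa [Real.norm_eq_abs, abs_mul] using
      norm_integral_le_integral_norm (fun ω => f ω * Y ω) (μ := P)
  refine h2.trans ?_
  rw [← integral_const_mul]
  refine integral_mono_ae
    (h1.abs.congr (Filter.Eventually.of_forall fun ω => abs_mul _ _))
    (((L1.integrable_coeFn Y).abs).const_mul C) ?_
  filter_upwards [hC] with ω hω
  exact mul_le_mul_of_nonneg_right hω (abs_nonneg _)

lemma conj_ge (ρ : Lp ℝ ⊤ P → ℝ) (Y : Lp ℝ 1 P) (X : Lp ℝ ⊤ P) :
    ((∫ ω, X ω * Y ω ∂P - ρ X : ℝ) : EReal) ≤ conjugate P ρ Y :=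
  le_iSup (fun X => ((∫ ω, X ω * Y ω ∂P - ρ X : ℝ) : EReal)) X

lemma conj_ge_bot (ρ : Lp ℝ ⊤ P → ℝ) (Y : Lp ℝ 1 P) :
    ((-ρ 0 : ℝ) : EReal) ≤ conjugate P ρ Y := by
  have h0 : ∫ ω, (0 : Lp ℝ ⊤ P) ω * Y ω ∂P = 0 := by
    rw [show (∫ ω, (0 : Lp ℝ ⊤ P) ω * Y ω ∂P) = ∫ ω, (0 : ℝ) ∂P from
      integral_congr_ae (by filter_upwards [Lp.coeFn_zero ℝ ⊤ P] with ω hω; rw [hω]; simp)]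
    simp
  have h := conj_ge ρ Y 0
  rwa [h0, zero_sub] at h

lemma conj_lower (ρ : Lp ℝ ⊤ P → ℝ)
    (hmono : ∀ X Y : Lp ℝ ⊤ P, X ≤ Y → ρ X ≤ ρ Y)
    (hcash : ∀ (X : Lp ℝ ⊤ P) (a : ℝ), ρ (X + Lp.const ⊤ P a) = ρ X + a)
    {c : ℝ} (hc : 0 ≤ c) (Y : Lp ℝ 1 P) :
    ((c * ∫ ω, |Y ω| ∂P - ρ 0 - c : ℝ) : EReal) ≤ conjugate P ρ Y := by
  set f : Ω → ℝ := fun ω => c * Real.sign (Y ω) with hfdef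
  have hfm : AEStronglyMeasurable f P := by
    have : AEMeasurable (fun ω => Real.sign (Y ω)) P :=
      measurable_realSign.comp_aemeasurable (Lp.aestronglyMeasurable Y).aemeasurable
    exact (this.const_mul c).aestronglyMeasurable
  have hfb : ∀ᵐ ω ∂P, ‖f ω‖ ≤ c := by
    refine Filter.Eventually.of_forall fun ω => ?_
    rw [Real.norm_eq_abs, hfdef, abs_mul, abs_of_nonneg hc]
    calc c * |Real.sign (Y ω)| ≤ c * 1 :=
          mul_le_mul_of_nonneg_left (abs_sign_le _) hc
      _ = c := mul_one c
  have hmem : MemLp f ⊤ P := memLp_top_of_bound hfm c hfb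
  set Xc : Lp ℝ ⊤ P := hmem.toLp f with hXc
  have hcoe : ⇑Xc =ᵐ[P] f := hmem.coeFn_toLp
  have hint : ∫ ω, Xc ω * Y ω ∂P = c * ∫ ω, |Y ω| ∂P := by
    have h1 : ∫ ω, Xc ω * Y ω ∂P = ∫ ω, f ω * Y ω ∂P :=
      integral_congr_ae (by filter_upwards [hcoe] with ω hω; rw [hω])
    have h2 : (fun ω => f ω * Y ω) = fun ω => c * |Y ω| := by
      funext ω
      rw [hfdef]
      calc c * Real.sign (Y ω) * Y ω = c * (Real.sign (Y ω) * Y ω) := by ring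
        _ = c * |Y ω| := by rw [sign_mul_self]
    rw [h1, h2, integral_const_mul]
  have hρXc : ρ Xc ≤ ρ 0 + c := by
    have hle : Xc ≤ (0 : Lp ℝ ⊤ P) + Lp.const ⊤ P c := by
      rw [← Lp.coeFn_le]
      filter_upwards [hcoe, Lp.coeFn_add (0 : Lp ℝ ⊤ P) (Lp.const ⊤ P c),
        Lp.coeFn_zero ℝ ⊤ P, Lp.coeFn_const ⊤ P c] with
        ω h1 h2 h3 h4
      rw [h1, h2]
      simp only [Pi.add_apply]
      rw [h3, h4]
      simp only [Pi.zero_apply, Function.const_apply, zero_add]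
      calc c * Real.sign (Y ω) ≤ c * 1 := by
            refine mul_le_mul_of_nonneg_left ?_ hc
            rcases Real.sign_apply_eq (Y ω) with h | h | h <;> rw [h] <;> norm_num
        _ = c := mul_one c
    calc ρ Xc ≤ ρ ((0 : Lp ℝ ⊤ P) + Lp.const ⊤ P c) := hmono _ _ hle
      _ = ρ 0 + c := hcash 0 c
  have h := conj_ge ρ Y Xc
  refine le_trans ?_ h
  rw [EReal.coe_le_coe_iff, hint]
  linarith

lemma rbb_ge (ρ : Lp ℝ ⊤ P → ℝ) (ρbb : Lp ℝ ⊤ P → ℝ)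
    (hρbb : ∀ X, (ρbb X : EReal) =
      ⨆ Y : Lp ℝ 1 P, ((∫ ω, X ω * Y ω ∂P : ℝ) : EReal) - conjugate P ρ Y)
    (Z : Lp ℝ ⊤ P) (Y : Lp ℝ 1 P) :
    ((∫ ω, Z ω * Y ω ∂P : ℝ) : EReal) - conjugate P ρ Y ≤ (ρbb Z : EReal) := by
  rw [hρbb Z]
  exact le_iSup (fun Y => ((∫ ω, Z ω * Y ω ∂P : ℝ) : EReal) - conjugate P ρ Y) Y

lemma exists_conj_real (ρ : Lp ℝ ⊤ P → ℝ) (ρbb : Lp ℝ ⊤ P → ℝ)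
    (hρbb : ∀ X, (ρbb X : EReal) =
      ⨆ Y : Lp ℝ 1 P, ((∫ ω, X ω * Y ω ∂P : ℝ) : EReal) - conjugate P ρ Y) :
    ∃ (Y0 : Lp ℝ 1 P) (r0 : ℝ), conjugate P ρ Y0 = (r0 : EReal) := by
  by_contra hcon
  push_neg at hcon
  have htop : ∀ Y : Lp ℝ 1 P, conjugate P ρ Y = ⊤ := by
    intro Y
    by_contra hne
    have hb : conjugate P ρ Y ≠ ⊥ :=
      ne_of_gt (lt_of_lt_of_le (EReal.bot_lt_coe _) (conj_ge_bot ρ Y))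
    exact hcon Y (conjugate P ρ Y).toReal (EReal.coe_toReal hne hb).symm
  have h0 := hρbb 0
  have : (⨆ Y : Lp ℝ 1 P, ((∫ ω, (0 : Lp ℝ ⊤ P) ω * Y ω ∂P : ℝ) : EReal) - conjugate P ρ Y)
      = (⊥ : EReal) := by
    rw [iSup_eq_bot]
    intro Y
    rw [htop Y, EReal.sub_top]
  rw [this] at h0
  exact EReal.coe_ne_bot _ h0

/-- The key comparison: `ρbb Z ≤ ρbb Z' + ε` provided the pairings against all `Y` in the
relevant sublevel set of the conjugate differ by at most `ε`. -/
lemma rbb_le (ρ : Lp ℝ ⊤ P → ℝ)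
    (hmono : ∀ X Y : Lp ℝ ⊤ P, X ≤ Y → ρ X ≤ ρ Y)
    (hcash : ∀ (X : Lp ℝ ⊤ P) (a : ℝ), ρ (X + Lp.const ⊤ P a) = ρ X + a)
    (ρbb : Lp ℝ ⊤ P → ℝ)
    (hρbb : ∀ X, (ρbb X : EReal) =
      ⨆ Y : Lp ℝ 1 P, ((∫ ω, X ω * Y ω ∂P : ℝ) : EReal) - conjugate P ρ Y)
    {M : ℝ} (hM : 0 ≤ M) {Y0 : Lp ℝ 1 P} {r0 : ℝ} (hY0 : conjugate P ρ Y0 = (r0 : EReal))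
    {Z Z' : Lp ℝ ⊤ P} (hZ : ‖Z‖ ≤ M) (hZ' : ‖Z'‖ ≤ M)
    {ε : ℝ} (hε : 0 ≤ ε)
    (h : ∀ Y : Lp ℝ 1 P,
      conjugate P ρ Y ≤ ((ρ 0 + 2 * M + 2 * M * (∫ ω, |Y0 ω| ∂P) + 2 * r0 : ℝ) : EReal) →
      ∫ ω, Z ω * Y ω ∂P - ∫ ω, Z' ω * Y ω ∂P ≤ ε) :
    ρbb Z ≤ ρbb Z' + ε := by
  set IY0 : ℝ := ∫ ω, |Y0 ω| ∂P with hIY0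
  set lam : ℝ := ρ 0 + 2 * M + 2 * M * IY0 + 2 * r0 with hlam
  have hIY0nn : 0 ≤ IY0 := integral_abs_nonneg Y0
  -- lower bound for ρbb Z'
  have hbZ' : -(M * IY0) - r0 ≤ ρbb Z' := by
    have h1 : |∫ ω, Z' ω * Y0 ω ∂P| ≤ M * IY0 := by
      refine integral_mul_le (Lp.aestronglyMeasurable Z') ?_ Y0
      filter_upwards [ae_bound Z'] with ω hω
      exact hω.trans hZ'
    have h2 := rbb_ge ρ ρbb hρbb Z' Y0
    rw [hY0, ← EReal.coe_sub, EReal.coe_le_coe_iff] at h2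
    have := abs_le.mp h1
    linarith [this.1]
  -- main estimate
  have hmain : (ρbb Z : EReal) ≤ ((ρbb Z' + ε : ℝ) : EReal) := by
    rw [hρbb Z]
    refine iSup_le fun Y => ?_
    by_cases hle : conjugate P ρ Y ≤ ((lam : ℝ) : EReal)
    · have hb : conjugate P ρ Y ≠ ⊥ :=
        ne_of_gt (lt_of_lt_of_le (EReal.bot_lt_coe _) (conj_ge_bot ρ Y))
      have ht : conjugate P ρ Y ≠ ⊤ := by
        intro hT
        rw [hT] at hle
        exact (not_le.mpr (EReal.coe_lt_top lam)) (le_of_eq (top_le_iff.mp hle).symm)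
      set r : ℝ := (conjugate P ρ Y).toReal with hr
      have hgr : conjugate P ρ Y = (r : EReal) := (EReal.coe_toReal ht hb).symm
      have hrlam : r ≤ lam := by
        rw [hgr, EReal.coe_le_coe_iff] at hle; exact hle
      have h1 : ∫ ω, Z ω * Y ω ∂P ≤ ∫ ω, Z' ω * Y ω ∂P + ε := by
        have := h Y (by rw [← hlam, ← hgr] at *; exact hle)
        linarith
      have h2 : ∫ ω, Z' ω * Y ω ∂P - r ≤ ρbb Z' := by
        have h3 := rbb_ge ρ ρbb hρbb Z' Y
        rw [hgr, ← EReal.coe_sub, EReal.coe_le_coe_iff] at h3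
        exact h3
      rw [hgr, ← EReal.coe_sub, EReal.coe_le_coe_iff]
      linarith
    · rcases eq_or_ne (conjugate P ρ Y) ⊤ with hT | hT
      · rw [hT, EReal.sub_top]
        exact bot_le
      · have hb : conjugate P ρ Y ≠ ⊥ :=
          ne_of_gt (lt_of_lt_of_le (EReal.bot_lt_coe _) (conj_ge_bot ρ Y))
        set r : ℝ := (conjugate P ρ Y).toReal with hr
        have hgr : conjugate P ρ Y = (r : EReal) := (EReal.coe_toReal hT hb).symm
        have hrlam : lam < r := by
          rw [hgr] at hle
          exact_mod_cast not_le.mp hle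
        have hY2 : 2 * M * (∫ ω, |Y ω| ∂P) - ρ 0 - 2 * M ≤ r := by
          have := conj_lower ρ hmono hcash (by linarith : (0:ℝ) ≤ 2 * M) Y
          rw [hgr, EReal.coe_le_coe_iff] at this
          exact this
        have hZY : ∫ ω, Z ω * Y ω ∂P ≤ M * ∫ ω, |Y ω| ∂P := by
          have h1 : |∫ ω, Z ω * Y ω ∂P| ≤ M * ∫ ω, |Y ω| ∂P := by
            refine integral_mul_le (Lp.aestronglyMeasurable Z) ?_ Y
            filter_upwards [ae_bound Z] with ω hω
            exact hω.trans hZ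
          exact (abs_le.mp h1).2
        rw [hgr, ← EReal.coe_sub, EReal.coe_le_coe_iff]
        rw [hlam] at hrlam
        linarith
  rwa [EReal.coe_le_coe_iff] at hmain

/-- Uniform integrability of the sublevel sets of the conjugate, in the concrete form we need:
pairings against the sublevel set converge uniformly along a sequence converging in measure. -/
lemma unif (ρ : Lp ℝ ⊤ P → ℝ) (hleb : LebesgueProperty P ρ) (lam : ℝ)
    (Xn : ℕ → Lp ℝ ⊤ P) (X : Lp ℝ ⊤ P) (M : ℝ) (hM : ∀ n, ‖Xn n‖ ≤ M) (hMX : ‖X‖ ≤ M)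
    (htm : TendstoInMeasure P (fun n => ⇑(Xn n)) atTop ⇑X) {ε : ℝ} (hε : 0 < ε) :
    ∀ᶠ n in atTop, ∀ Y : Lp ℝ 1 P, conjugate P ρ Y ≤ (lam : EReal) →
      |∫ ω, (Xn n) ω * Y ω ∂P - ∫ ω, X ω * Y ω ∂P| ≤ ε := by
  have hM0 : 0 ≤ M := (norm_nonneg X).trans hMX
  by_contra hcon
  rw [Filter.not_eventually] at hcon
  have hcon' : ∃ᶠ n in atTop, ∃ Y : Lp ℝ 1 P, conjugate P ρ Y ≤ (lam : EReal) ∧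
      ε < |∫ ω, (Xn n) ω * Y ω ∂P - ∫ ω, X ω * Y ω ∂P| := by
    refine hcon.mono fun n hn => ?_
    push_neg at hn
    exact hn
  obtain ⟨φ, hφ, hPφ⟩ := Filter.extraction_of_frequently_atTop hcon'
  set κ : ℝ := (|lam| + |ρ 0| + 2) / ε with hκ
  have hκpos : 0 < κ := by positivity
  set W : ℕ → Lp ℝ ⊤ P := fun k => Xn (φ k) - X with hW
  have hWb : ∀ k, ∀ᵐ ω ∂P, |(W k) ω| ≤ 2 * M := by
    intro k
    filter_upwards [ae_bound (W k)] with ω hω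
    refine hω.trans ?_
    calc ‖W k‖ ≤ ‖Xn (φ k)‖ + ‖X‖ := norm_sub_le _ _
      _ ≤ 2 * M := by linarith [hM (φ k)]
  have hWcoe : ∀ k, ⇑(W k) =ᵐ[P] ⇑(Xn (φ k)) - ⇑X := fun k => Lp.coeFn_sub _ _
  set Yk : ℕ → Lp ℝ 1 P := fun k => (hPφ k).choose with hYk
  have hYk1 : ∀ k, conjugate P ρ (Yk k) ≤ (lam : EReal) := fun k => (hPφ k).choose_spec.1
  have hYk2 : ∀ k, ε < |∫ ω, (Xn (φ k)) ω * (Yk k) ω ∂P - ∫ ω, X ω * (Yk k) ω ∂P| :=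
    fun k => (hPφ k).choose_spec.2
  -- the test functions
  set f : ℕ → Ω → ℝ := fun k ω => κ * Real.sign ((Yk k) ω) * |(W k) ω| with hf
  have hfm : ∀ k, AEStronglyMeasurable (f k) P := by
    intro k
    have h1 : AEMeasurable (fun ω => Real.sign ((Yk k) ω)) P :=
      measurable_realSign.comp_aemeasurable (Lp.aestronglyMeasurable (Yk k)).aemeasurable
    have h2 : AEMeasurable (fun ω => |(W k) ω|) P :=
      (continuous_abs.measurable).comp_aemeasurable
        (Lp.aestronglyMeasurable (W k)).aemeasurable
    exact ((h1.const_mul κ).mul h2).aestronglyMeasurable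
  have hfb : ∀ k, ∀ᵐ ω ∂P, ‖f k ω‖ ≤ κ * (2 * M) := by
    intro k
    filter_upwards [hWb k] with ω hω
    rw [Real.norm_eq_abs, hf]
    simp only
    rw [abs_mul, abs_mul, abs_abs, abs_of_pos hκpos]
    calc κ * |Real.sign ((Yk k) ω)| * |(W k) ω| ≤ κ * 1 * (2 * M) := by
          refine mul_le_mul (by
            refine mul_le_mul_of_nonneg_left (abs_sign_le _) hκpos.le) hω (abs_nonneg _) ?_
          positivity
      _ = κ * (2 * M) := by ring
  have hmem : ∀ k, MemLp (f k) ⊤ P := fun k => memLp_top_of_bound (hfm k) _ (hfb k)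
  set U : ℕ → Lp ℝ ⊤ P := fun k => (hmem k).toLp (f k) with hU
  have hUcoe : ∀ k, ⇑(U k) =ᵐ[P] f k := fun k => (hmem k).coeFn_toLp
  have hUnivNN : measureUnivNNReal P = 1 := by
    have h1 : (measureUnivNNReal P : ENNReal) = 1 := by
      rw [coe_measureUnivNNReal, measure_univ]
    exact_mod_cast h1
  have hUb : ∀ k, ‖U k‖ ≤ κ * (2 * M) := by
    intro k
    have h := Lp.norm_le_of_ae_bound (f := U k) (C := κ * (2 * M)) (by positivity) ?hb
    case hb =>
      filter_upwards [hUcoe k, hfb k] with ω h1 h2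
      rw [h1]; exact h2
    rw [hUnivNN] at h
    simpa using h
  -- convergence in measure of U to 0
  have hUtm : TendstoInMeasure P (fun k => ⇑(U k)) atTop ⇑(0 : Lp ℝ ⊤ P) := by
    rw [tendstoInMeasure_iff_dist]
    intro δ hδ
    have hδκ : 0 < δ / κ := by positivity
    have hbound : ∀ k, P {ω | δ ≤ dist ((U k) ω) ((0 : Lp ℝ ⊤ P) ω)} ≤
        P {ω | δ / κ ≤ dist ((Xn (φ k)) ω) (X ω)} := by
      intro k
      refine measure_mono_ae ?_
      filter_upwards [hUcoe k, hWcoe k, Lp.coeFn_zero ℝ ⊤ P] with ω h1 h2 h3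
      intro hω
      have hω' : δ ≤ |f k ω| := by
        have : dist ((U k) ω) ((0 : Lp ℝ ⊤ P) ω) = |f k ω| := by
          rw [Real.dist_eq, h1, h3, Pi.zero_apply, sub_zero]
        exact le_of_le_of_eq hω this
      have habs : |f k ω| ≤ κ * |(W k) ω| := by
        have : |f k ω| = κ * |Real.sign ((Yk k) ω)| * |(W k) ω| := by
          simp only [hf, abs_mul, abs_abs, abs_of_pos hκpos]
        rw [this]
        refine mul_le_mul_of_nonneg_right ?_ (abs_nonneg _)
        calc κ * |Real.sign ((Yk k) ω)| ≤ κ * 1 :=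
              mul_le_mul_of_nonneg_left (abs_sign_le _) hκpos.le
          _ = κ := mul_one κ
      have h4 : δ ≤ κ * |(W k) ω| := hω'.trans habs
      show δ / κ ≤ dist ((Xn (φ k)) ω) (X ω)
      have h5 : |(W k) ω| = |(Xn (φ k)) ω - X ω| := by rw [h2]; rfl
      rw [Real.dist_eq, ← h5, div_le_iff₀' hκpos]
      exact h4
    have htend : Tendsto (fun k => P {ω | δ / κ ≤ dist ((Xn (φ k)) ω) (X ω)}) atTop (nhds 0) :=
      (tendstoInMeasure_iff_dist.mp htm (δ / κ) hδκ).comp (hφ.tendsto_atTop)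
    exact tendsto_of_tendsto_of_tendsto_of_le_of_le tendsto_const_nhds htend
      (fun k => zero_le) hbound
  -- apply the Lebesgue property
  have hUlim : Tendsto (fun k => ρ (U k)) atTop (nhds (ρ 0)) :=
    hleb U 0 ⟨κ * (2 * M), hUb⟩ hUtm
  -- lower bound on ρ (U k)
  have hUlb : ∀ k, κ * ε - lam < ρ (U k) := by
    intro k
    have hconj := conj_ge ρ (Yk k) (U k)
    have hle := hconj.trans (hYk1 k)
    rw [EReal.coe_le_coe_iff] at hle
    -- compute ∫ U k * Y k
    have hWint : Integrable (fun ω => (W k) ω * (Yk k) ω) P :=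
      integrable_mul (Lp.aestronglyMeasurable (W k)) (hWb k) (Yk k)
    have hWYabs : Integrable (fun ω => |(W k) ω| * |(Yk k) ω|) P :=
      hWint.abs.congr (Filter.Eventually.of_forall fun ω => abs_mul _ _)
    have hint1 : ∫ ω, (U k) ω * (Yk k) ω ∂P = κ * ∫ ω, |(W k) ω| * |(Yk k) ω| ∂P := by
      have h1 : ∫ ω, (U k) ω * (Yk k) ω ∂P = ∫ ω, f k ω * (Yk k) ω ∂P :=
        integral_congr_ae (by filter_upwards [hUcoe k] with ω hω; rw [hω])
      have h2 : (fun ω => f k ω * (Yk k) ω) = fun ω => κ * (|(W k) ω| * |(Yk k) ω|) := by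
        funext ω
        rw [hf]
        simp only
        calc κ * Real.sign ((Yk k) ω) * |(W k) ω| * (Yk k) ω
            = κ * (|(W k) ω| * (Real.sign ((Yk k) ω) * (Yk k) ω)) := by ring
          _ = κ * (|(W k) ω| * |(Yk k) ω|) := by rw [sign_mul_self]
      rw [h1, h2, integral_const_mul]
    have habsint : |∫ ω, (W k) ω * (Yk k) ω ∂P| ≤ ∫ ω, |(W k) ω| * |(Yk k) ω| ∂P := by
      simpa [Real.norm_eq_abs, abs_mul] using
        norm_integral_le_integral_norm (fun ω => (W k) ω * (Yk k) ω) (μ := P)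
    have hsub : ∫ ω, (W k) ω * (Yk k) ω ∂P =
        ∫ ω, (Xn (φ k)) ω * (Yk k) ω ∂P - ∫ ω, X ω * (Yk k) ω ∂P := by
      have hXnint : Integrable (fun ω => (Xn (φ k)) ω * (Yk k) ω) P := by
        exact integrable_mul (Lp.aestronglyMeasurable _) (ae_bound (Xn (φ k))) (Yk k)
      have hXint : Integrable (fun ω => X ω * (Yk k) ω) P := by
        exact integrable_mul (Lp.aestronglyMeasurable _) (ae_bound X) (Yk k)
      rw [← integral_sub hXnint hXint]
      refine integral_congr_ae ?_
      filter_upwards [hWcoe k] with ω hω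
      rw [hω]
      simp only [Pi.sub_apply]
      ring
    have hgeps : ε < ∫ ω, |(W k) ω| * |(Yk k) ω| ∂P := by
      have := hYk2 k
      rw [← hsub] at this
      exact this.trans_le habsint
    have hUY : κ * ε < ∫ ω, (U k) ω * (Yk k) ω ∂P := by
      rw [hint1]
      exact (mul_lt_mul_of_pos_left hgeps hκpos)
    linarith
  -- contradiction
  have hbig : ρ 0 + 2 ≤ κ * ε - lam := by
    rw [hκ, div_mul_cancel₀ _ (ne_of_gt hε)]
    have h1 : ρ 0 ≤ |ρ 0| := le_abs_self _
    have h2 : lam ≤ |lam| := le_abs_self _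
    linarith
  have hev : ∀ᶠ k in atTop, |ρ (U k) - ρ 0| < 1 := by
    have := Metric.tendsto_atTop.mp hUlim 1 one_pos
    obtain ⟨N, hN⟩ := this
    refine Filter.eventually_atTop.mpr ⟨N, fun k hk => ?_⟩
    have := hN k hk
    rwa [Real.dist_eq] at this
  obtain ⟨k, hk⟩ := hev.exists
  have := hUlb k
  have h1 := abs_lt.mp hk
  linarith [hbig, h1.2]

end RiskAux

/-- if a risk measure `ρ` has the Lebesgue property and its biconjugate
`ρ**` is real-valued, then `ρ**` has the Lebesgue property. -/
theorem biconjugate_lebesgue_property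
    {Ω : Type*} [MeasurableSpace Ω] (P : Measure Ω) [IsProbabilityMeasure P]
    (ρ : Lp ℝ ⊤ P → ℝ)
    (hmono : ∀ X Y : Lp ℝ ⊤ P, X ≤ Y → ρ X ≤ ρ Y)
    (hcash : ∀ (X : Lp ℝ ⊤ P) (a : ℝ), ρ (X + Lp.const ⊤ P a) = ρ X + a)
    (hleb : LebesgueProperty P ρ)
    (ρbb : Lp ℝ ⊤ P → ℝ)
    (hρbb : ∀ X, (ρbb X : EReal) =
      ⨆ Y : Lp ℝ 1 P, ((∫ ω, X ω * Y ω ∂P : ℝ) : EReal) - conjugate P ρ Y) :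
    LebesgueProperty P ρbb := by
  intro Xn X hbdd htm
  obtain ⟨M0, hM0⟩ := hbdd
  obtain ⟨Y0, r0, hY0⟩ := RiskAux.exists_conj_real ρ ρbb hρbb
  set M : ℝ := max M0 ‖X‖ with hMdef
  have hMX : ‖X‖ ≤ M := le_max_right _ _
  have hMn : ∀ n, ‖Xn n‖ ≤ M := fun n => (hM0 n).trans (le_max_left _ _)
  have hM : 0 ≤ M := (norm_nonneg X).trans hMX
  set lam : ℝ := ρ 0 + 2 * M + 2 * M * (∫ ω, |Y0 ω| ∂P) + 2 * r0 with hlam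
  rw [Metric.tendsto_atTop]
  intro ε hε
  have hunif := RiskAux.unif ρ hleb lam Xn X M hMn hMX htm (half_pos hε)
  obtain ⟨N, hN⟩ := Filter.eventually_atTop.mp hunif
  refine ⟨N, fun n hn => ?_⟩
  have hbound := hN n hn
  have h1 : ρbb (Xn n) ≤ ρbb X + ε / 2 := by
    refine RiskAux.rbb_le ρ hmono hcash ρbb hρbb hM hY0 (hMn n) hMX (half_pos hε).le ?_
    intro Y hY
    have := hbound Y hY
    linarith [(abs_le.mp this).2]
  have h2 : ρbb X ≤ ρbb (Xn n) + ε / 2 := by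
    refine RiskAux.rbb_le ρ hmono hcash ρbb hρbb hM hY0 hMX (hMn n) (half_pos hε).le ?_
    intro Y hY
    have := hbound Y hY
    linarith [(abs_le.mp this).1]
  rw [Real.dist_eq, abs_lt]
  constructor <;> linarith
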